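/- Let Y be a Banach space, A the generator of a semigroup V(t) on Y with ‖V(t)‖ ≤ M_V e^{-λ_Y t}, Z ⊂ Y continuously embedded, B ∈ L(Y,Z) bounded, and suppose A+B generates a semigroup U^Z(t) on Z with ‖U^Z(t)‖_{L(Z)} ≤ M_Z e^{-λ_Z t} where λ_Z > λ_Y. Then A+B generates a semigroup U^Y(t) on Y satisfying ‖U^Y(t)‖_{L(Y)} ≤ M_V(1 + M_Z ‖B‖ (λ_Z - λ_Y)^{-1}) e^{-λ_Y t} for all t ≥ 0. -/

import Mathlib

open MeasureTheory

lemma exp_int_le {c t : ℝ} (hc : 0 < c) :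
    ∫ r in (0:ℝ)..t, Real.exp (-c * (t - r)) ≤ c⁻¹ := by
  have h1 : (∫ r in (0:ℝ)..t, Real.exp (-c * (t - r)))
      = ∫ s in (0:ℝ)..t, Real.exp (-c * s) := by
    simpa using intervalIntegral.integral_comp_sub_left
      (a := (0:ℝ)) (b := t) (fun s => Real.exp (-c * s)) t
  have h2 : (∫ s in (0:ℝ)..t, Real.exp (-c * s))
      = (-c)⁻¹ * (Real.exp (-c * t) - 1) := by
    have := intervalIntegral.integral_comp_mul_left (a := (0:ℝ)) (b := t)
      (fun x => Real.exp x) (c := -c) (neg_ne_zero.mpr hc.ne')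
    rw [this, integral_exp]
    simp [smul_eq_mul]
  rw [h1, h2]
  have h3 : (-c)⁻¹ * (Real.exp (-c * t) - 1) = c⁻¹ * (1 - Real.exp (-c * t)) := by
    rw [inv_neg]; ring
  rw [h3]
  have : 1 - Real.exp (-c * t) ≤ 1 := by
    have := Real.exp_pos (-c * t); linarith
  calc c⁻¹ * (1 - Real.exp (-c * t)) ≤ c⁻¹ * 1 :=
        mul_le_mul_of_nonneg_left this (inv_nonneg.mpr hc.le)
    _ = c⁻¹ := mul_one _

/-- Semigroup version of the Gualdani–Mischler–Mouhot extension principle: the decay of the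
semigroup generated by `A+B` transfers from the smaller space `Z` (continuously embedded in
`Y` via `ι`) to the larger space `Y`.  Generation is encoded through the semigroup axioms,
the intertwining relation and Duhamel's formula `U^Y(t)h = V(t)h + ∫₀ᵗ U^Y(t-r) B V(r) h dr`. -/
theorem semigroup_extension_principle
    {Y Z : Type*} [NormedAddCommGroup Y] [NormedSpace ℝ Y] [CompleteSpace Y]
    [NormedAddCommGroup Z] [NormedSpace ℝ Z] [CompleteSpace Z]
    (ι : Z →L[ℝ] Y) (hι : ∀ z : Z, ‖ι z‖ ≤ ‖z‖)
    (V : ℝ → Y →L[ℝ] Y) (UZ : ℝ → Z →L[ℝ] Z) (UY : ℝ → Y →L[ℝ] Y)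
    (B : Y →L[ℝ] Z)
    (MV MZ lamY lamZ : ℝ) (hMV : 0 < MV) (hMZ : 0 < MZ) (hlam : lamY < lamZ)
    -- V is the semigroup generated by A on Y, with decay
    (hV : ∀ t : ℝ, 0 ≤ t → ‖V t‖ ≤ MV * Real.exp (-lamY * t))
    -- U^Z is the semigroup generated by A+B on Z, with decay
    (hUZ : ∀ t : ℝ, 0 ≤ t → ‖UZ t‖ ≤ MZ * Real.exp (-lamZ * t))
    -- semigroup axioms for U^Y
    (hUYid : UY 0 = ContinuousLinearMap.id ℝ Y)
    (hUYsg : ∀ s t : ℝ, 0 ≤ s → 0 ≤ t → (UY t).comp (UY s) = UY (t + s))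
    -- intertwining: U^Y restricted to Z agrees with U^Z
    (hcompat : ∀ t : ℝ, 0 ≤ t → ∀ z : Z, UY t (ι z) = ι (UZ t z))
    -- Duhamel's formula
    (hDuhamel : ∀ t : ℝ, 0 ≤ t → ∀ h : Y,
      UY t h = V t h + ∫ r in (0 : ℝ)..t, UY (t - r) (ι (B (V r h)))) :
    ∀ t : ℝ, 0 ≤ t →
      ‖UY t‖ ≤ MV * (1 + MZ * ‖B‖ * (lamZ - lamY)⁻¹) * Real.exp (-lamY * t) := by
  intro t ht
  set c := lamZ - lamY with hc
  have hcpos : 0 < c := sub_pos.mpr hlam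
  apply ContinuousLinearMap.opNorm_le_bound _ (by positivity)
  intro h
  set K := MZ * ‖B‖ * MV * ‖h‖ * Real.exp (-lamY * t) with hK
  have hKnn : 0 ≤ K := by positivity
  have hVh : ∀ r : ℝ, 0 ≤ r → ‖V r h‖ ≤ MV * Real.exp (-lamY * r) * ‖h‖ := by
    intro r hr
    calc ‖V r h‖ ≤ ‖V r‖ * ‖h‖ := (V r).le_opNorm _
      _ ≤ MV * Real.exp (-lamY * r) * ‖h‖ := by gcongr; exact hV r hr
  have key : ∀ r ∈ Set.uIoc (0:ℝ) t, ‖UY (t - r) (ι (B (V r h)))‖ ≤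
      K * Real.exp (-c * (t - r)) := by
    intro r hr
    rw [Set.uIoc_of_le ht] at hr
    obtain ⟨hr0, hrt⟩ := hr
    have hr0' : 0 ≤ r := hr0.le
    have htr : 0 ≤ t - r := sub_nonneg.mpr hrt
    rw [hcompat _ htr]
    have hexp : Real.exp (-lamZ * (t - r)) * Real.exp (-lamY * r)
        = Real.exp (-lamY * t) * Real.exp (-c * (t - r)) := by
      rw [← Real.exp_add, ← Real.exp_add]
      congr 1
      simp only [hc]; ring
    calc ‖ι (UZ (t - r) (B (V r h)))‖ ≤ ‖UZ (t - r) (B (V r h))‖ := hι _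
      _ ≤ ‖UZ (t - r)‖ * ‖B (V r h)‖ := (UZ (t - r)).le_opNorm _
      _ ≤ (MZ * Real.exp (-lamZ * (t - r))) * (‖B‖ * (MV * Real.exp (-lamY * r) * ‖h‖)) := by
          apply mul_le_mul (hUZ _ htr) _ (norm_nonneg _) (by positivity)
          calc ‖B (V r h)‖ ≤ ‖B‖ * ‖V r h‖ := B.le_opNorm _
            _ ≤ ‖B‖ * (MV * Real.exp (-lamY * r) * ‖h‖) := by
                gcongr; exact hVh r hr0'
      _ = K * Real.exp (-c * (t - r)) := by
          rw [hK]
          rw [show MZ * Real.exp (-lamZ * (t - r)) * (‖B‖ * (MV * Real.exp (-lamY * r) * ‖h‖))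
              = MZ * ‖B‖ * MV * ‖h‖ * (Real.exp (-lamZ * (t - r)) * Real.exp (-lamY * r)) by ring,
            hexp]
          ring
  have hint : ‖∫ r in (0:ℝ)..t, UY (t - r) (ι (B (V r h)))‖ ≤ K * c⁻¹ := by
    have hg : IntervalIntegrable (fun r => K * Real.exp (-c * (t - r))) volume 0 t := by
      apply Continuous.intervalIntegrable
      fun_prop
    have hb := intervalIntegral.norm_integral_le_abs_of_norm_le
      ((ae_restrict_mem measurableSet_uIoc).mono key) hg
    have hgeq : (∫ r in (0:ℝ)..t, K * Real.exp (-c * (t - r)))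
        = K * ∫ r in (0:ℝ)..t, Real.exp (-c * (t - r)) := intervalIntegral.integral_const_mul _ _
    have hgnn : 0 ≤ ∫ r in (0:ℝ)..t, K * Real.exp (-c * (t - r)) := by
      apply intervalIntegral.integral_nonneg ht
      intro x _; positivity
    rw [abs_of_nonneg hgnn, hgeq] at hb
    refine hb.trans ?_
    exact mul_le_mul_of_nonneg_left (exp_int_le hcpos) hKnn
  rw [hDuhamel t ht h]
  calc ‖V t h + ∫ r in (0:ℝ)..t, UY (t - r) (ι (B (V r h)))‖
      ≤ ‖V t h‖ + ‖∫ r in (0:ℝ)..t, UY (t - r) (ι (B (V r h)))‖ := norm_add_le _ _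
    _ ≤ MV * Real.exp (-lamY * t) * ‖h‖ + K * c⁻¹ := add_le_add (hVh t ht) hint
    _ = MV * (1 + MZ * ‖B‖ * c⁻¹) * Real.exp (-lamY * t) * ‖h‖ := by
        rw [hK]; field_simp
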